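/- Let S be a nonempty finite set of positive integers. Then there exists ν₀ ≥ 0 such that for every n ≥ 1 whose 2-adic valuation is at least ν₀, the quadratic trace function Q_n(x) = Tr(∑_{i∈S} x^(2^i+1)) on GaloisField 2 n is not balanced. -/

import Mathlib

open Polynomial Finset

namespace QtrAux

/-- Shrink the exponent in a divisibility `g ∣ c ^ N` using the degree of `g`. -/
lemma dvd_pow_shrink {k : Type*} [Field k] {c : k[X]} (hc : c ≠ 0) :
    ∀ (M : ℕ) (g : k[X]) (N : ℕ), g ∣ c ^ N → g.natDegree ≤ M → g ∣ c ^ M := by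
  intro M
  induction M with
  | zero =>
    intro g N hdvd hdeg
    have hg0 : g ≠ 0 := ne_zero_of_dvd_ne_zero (pow_ne_zero _ hc) hdvd
    obtain ⟨a, rfl⟩ := Polynomial.natDegree_eq_zero.mp (Nat.le_zero.mp hdeg)
    have ha : a ≠ 0 := fun h => hg0 (by simp [h])
    exact ((Polynomial.isUnit_C).mpr (isUnit_iff_ne_zero.mpr ha)).dvd
  | succ M ih =>
    intro g N hdvd hdeg
    by_cases hu : IsUnit g
    · exact hu.dvd
    have hg0 : g ≠ 0 := ne_zero_of_dvd_ne_zero (pow_ne_zero _ hc) hdvd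
    obtain ⟨p, hpirr, hpg⟩ := WfDvdMonoid.exists_irreducible_factor hu hg0
    have hN : N ≠ 0 := by
      rintro rfl
      exact hu (isUnit_of_dvd_one (by simpa using hdvd))
    have hpc : p ∣ c := hpirr.prime.dvd_of_dvd_pow (hpg.trans hdvd)
    obtain ⟨g', rfl⟩ := hpg
    have hp0 : p ≠ 0 := hpirr.ne_zero
    have hg'0 : g' ≠ 0 := fun h => hg0 (by simp [h])
    have hdeg' : g'.natDegree ≤ M := by
      have hmul := Polynomial.natDegree_mul hp0 hg'0
      have hp1 := hpirr.natDegree_pos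
      omega
    have hg'd : g' ∣ c ^ N := (dvd_mul_left g' p).trans hdvd
    have := ih g' N hg'd hdeg'
    rw [pow_succ, mul_comm p g']
    exact mul_dvd_mul this hpc

section
variable (n : ℕ)
local notation "F" => GaloisField 2 n
local notation "Tr" => Algebra.trace (ZMod 2) (GaloisField 2 n)

noncomputable instance : Fintype (GaloisField 2 n) := Fintype.ofFinite _

lemma cardF (h : n ≠ 0) : Fintype.card (GaloisField 2 n) = 2 ^ n := by
  rw [← Nat.card_eq_fintype_card, GaloisField.card 2 n h]

lemma powcard (h : n ≠ 0) (x : F) : x ^ (2 ^ n) = x := by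
  rw [← cardF n h]; exact FiniteField.pow_card x

/-- Frobenius as an algebra equivalence over `ZMod 2`. -/
noncomputable def frobAE : F ≃ₐ[ZMod 2] F :=
  AlgEquiv.ofRingEquiv (f := frobeniusEquiv (GaloisField 2 n) 2) (by
    intro c
    show frobenius (GaloisField 2 n) 2 _ = _
    rw [frobenius_def, ← map_pow]
    congr 1
    revert c; decide)

lemma frobAE_apply (x : F) : frobAE n x = x ^ 2 := rfl

lemma frobAE_pow (k : ℕ) : ∀ x : F, ((frobAE n) ^ k) x = x ^ (2 ^ k) := by
  induction k with
  | zero => intro x; simp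
  | succ k ih =>
    intro x
    rw [pow_succ, AlgEquiv.mul_apply, frobAE_apply, ih (x ^ 2), ← pow_mul]
    ring_nf

lemma frobAE_pow_inj (h : n ≠ 0) : Function.Injective
    (fun j : Fin n => (frobAE n) ^ (j : ℕ)) := by
  have key : ∀ d : ℕ, d < n → (frobAE n) ^ d = 1 → d = 0 := by
    intro d hd hone
    by_contra hd0
    classical
    obtain ⟨g, hg⟩ := IsCyclic.exists_generator (α := (GaloisField 2 n)ˣ)
    have hord : orderOf g = 2 ^ n - 1 := by
      rw [orderOf_eq_card_of_forall_mem_zpowers hg, Nat.card_eq_fintype_card,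
        Fintype.card_units, cardF n h]
    have hgd : (g : F) ^ (2 ^ d) = (g : F) := by
      have := congrArg (fun σ => σ (g : F)) hone
      simpa [frobAE_pow] using this
    have h2d : 2 ≤ 2 ^ d := by
      calc 2 = 2 ^ 1 := rfl
        _ ≤ 2 ^ d := Nat.pow_le_pow_right (by norm_num) (Nat.one_le_iff_ne_zero.mpr hd0)
    have hgd' : g ^ (2 ^ d - 1) = 1 := by
      have h1 : g ^ (2 ^ d) = g := by
        ext; push_cast [Units.val_pow_eq_pow_val]; exact hgd
      have h2 : g ^ (2 ^ d - 1) * g = g := by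
        rw [← pow_succ, Nat.sub_add_cancel (by omega)]; exact h1
      exact mul_right_cancel (b := g) (by rw [h2, one_mul] :
        g ^ (2 ^ d - 1) * g = 1 * g)
    have hdvd := orderOf_dvd_of_pow_eq_one hgd'
    rw [hord] at hdvd
    have hle : 2 ^ n - 1 ≤ 2 ^ d - 1 := Nat.le_of_dvd (by omega) hdvd
    have h2n : 2 ^ d < 2 ^ n := Nat.pow_lt_pow_right (by norm_num) hd
    omega
  have main : ∀ j k : Fin n, (j:ℕ) ≤ (k:ℕ) →
      (frobAE n) ^ (j:ℕ) = (frobAE n) ^ (k:ℕ) → j = k := by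
    intro j k hle hjk
    have hsub : (frobAE n) ^ ((k:ℕ) - (j:ℕ)) = 1 := by
      have h5 : (frobAE n) ^ ((j:ℕ) + ((k:ℕ) - (j:ℕ))) = (frobAE n) ^ (j:ℕ) * 1 := by
        rw [Nat.add_sub_cancel' hle, mul_one, hjk]
      rw [pow_add] at h5
      exact mul_left_cancel h5
    have := key _ (by omega) hsub
    exact Fin.ext (by omega)
  intro j k hjk
  simp only at hjk
  rcases le_total (j:ℕ) (k:ℕ) with hle | hle
  · exact main j k hle hjk
  · exact (main k j hle hjk.symm).symm

lemma trace_power_sum (h : n ≠ 0) (x : F) :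
    algebraMap (ZMod 2) (GaloisField 2 n) (Tr x) = ∑ j ∈ range n, x ^ (2 ^ j) := by
  rw [trace_eq_sum_automorphisms]
  have hcard : Fintype.card ((GaloisField 2 n) ≃ₐ[ZMod 2] (GaloisField 2 n)) = n := by
    rw [← Nat.card_eq_fintype_card, IsGalois.card_aut_eq_finrank, GaloisField.finrank 2 h]
  have hbij : Function.Bijective (fun j : Fin n => (frobAE n) ^ (j : ℕ)) := by
    rw [Fintype.bijective_iff_injective_and_card, hcard]
    exact ⟨frobAE_pow_inj n h, Fintype.card_fin n⟩
  rw [← Fintype.sum_bijective _ hbij _ (fun σ => σ x) (fun j => rfl), ← Fin.sum_univ_eq_sum_range]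
  exact Finset.sum_congr rfl fun j _ => frobAE_pow n j x

lemma amap_inj : Function.Injective (algebraMap (ZMod 2) (GaloisField 2 n)) :=
  (algebraMap (ZMod 2) (GaloisField 2 n)).injective

lemma trace_frob (h : n ≠ 0) (x : F) : Tr (x ^ 2) = Tr x := by
  apply amap_inj n
  rw [trace_power_sum n h, trace_power_sum n h]
  have e1 : ∀ j : ℕ, (x ^ 2) ^ (2 ^ j) = x ^ (2 ^ (j + 1)) := by
    intro j; rw [← pow_mul, pow_succ, mul_comm (2^j) 2]
  simp_rw [e1]
  have h2 : ∑ j ∈ range (n + 1), x ^ (2 ^ j) =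
      (∑ j ∈ range n, x ^ (2 ^ (j + 1))) + x ^ (2 ^ 0) := Finset.sum_range_succ' _ n
  rw [Finset.sum_range_succ, powcard n h] at h2
  rw [pow_zero, pow_one] at h2
  exact add_right_cancel h2.symm

lemma trace_pow2 (h : n ≠ 0) (k : ℕ) (x : F) : Tr (x ^ (2 ^ k)) = Tr x := by
  induction k with
  | zero => simp
  | succ k ih =>
    have : x ^ (2 ^ (k+1)) = (x ^ (2 ^ k)) ^ 2 := by
      rw [← pow_mul, pow_succ]
    rw [this, trace_frob n h, ih]

lemma trace_shift (h : n ≠ 0) {i : ℕ} (hi : i ≤ n) (x u : F) :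
    Tr (x ^ (2 ^ i) * u) = Tr (x * u ^ (2 ^ (n - i))) := by
  rw [← trace_pow2 n h (n - i) (x ^ (2 ^ i) * u)]
  congr 1
  rw [mul_pow, ← pow_mul, ← pow_add, Nat.add_sub_cancel' hi, powcard n h]

lemma trace_zero_of_half_fixed {m : ℕ} (hm : m ≠ 0) (hn : n = m + m) (y : F)
    (hy : y ^ (2 ^ m) = y) : Tr y = 0 := by
  subst hn
  have h : m + m ≠ 0 := by omega
  apply amap_inj (m + m)
  rw [trace_power_sum (m + m) h, map_zero, Finset.sum_range_add]
  have e1 : ∀ j, y ^ (2 ^ (m + j)) = y ^ (2 ^ j) := by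
    intro j; rw [pow_add, pow_mul, hy]
  simp_rw [e1]
  exact CharTwo.add_self_eq_zero _

/-- Frobenius as a linear endomorphism over `ZMod 2`. -/
noncomputable def frobL : Module.End (ZMod 2) (GaloisField 2 n) where
  toFun x := x ^ 2
  map_add' x y := add_pow_char _ _ _
  map_smul' c x := by
    have hc : c ^ 2 = c := by revert c; decide
    rw [RingHom.id_apply]
    show (c • x) ^ 2 = c • x ^ 2
    rw [_root_.smul_pow, hc]

lemma frobL_pow (k : ℕ) : ∀ x : F, ((frobL n) ^ k) x = x ^ (2 ^ k) := by
  induction k with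
  | zero => intro x; simp
  | succ k ih =>
    intro x
    rw [pow_succ, Module.End.mul_apply]
    show ((frobL n) ^ k) (x ^ 2) = _
    rw [ih (x ^ 2), ← pow_mul]
    ring_nf

lemma aeval_Xpow_apply (k : ℕ) (x : F) :
    (Polynomial.aeval (frobL n) ((X : (ZMod 2)[X]) ^ k)) x = x ^ (2 ^ k) := by
  rw [map_pow, aeval_X]; exact frobL_pow n k x

lemma radical_in_subfield (S : Finset ℕ) (hS : S.Nonempty) (hpos : ∀ i ∈ S, 1 ≤ i)
    (r : ℕ) (hr : r ≠ 0) (hn : n = 2 ^ (S.max' hS + 3) * r) (u : F)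
    (hu : ∑ i ∈ S, (u ^ (2 ^ i) + u ^ (2 ^ (n - i))) = 0) :
    u ^ (2 ^ (2 ^ (S.max' hS + 2) * r)) = u := by
  set I := S.max' hS with hI
  have hI1 : 1 ≤ I := hpos I (S.max'_mem hS)
  have hImem : ∀ i ∈ S, i ≤ I := fun i hi => S.le_max' i hi
  have hn0 : n ≠ 0 := by rw [hn]; positivity
  have hIn : I + I ≤ n := by
    have h1 : I < 2 ^ I := Nat.lt_two_pow_self
    have h2 : 2 ^ (I + 3) ≤ n := by
      rw [hn]; exact Nat.le_mul_of_pos_right _ (by omega)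
    have h3 : 2 ^ I * 8 = 2 ^ (I + 3) := by ring
    nlinarith
  set b : (ZMod 2)[X] := ∑ i ∈ S, ((X : (ZMod 2)[X]) ^ (I + i) + X ^ (I - i)) with hb
  have hbdeg : b.natDegree ≤ 2 * I := by
    apply Polynomial.natDegree_sum_le_of_forall_le
    intro i hi
    apply le_trans (Polynomial.natDegree_add_le _ _)
    simp only [Polynomial.natDegree_X_pow]
    have := hImem i hi
    omega
  have hb0 : b ≠ 0 := by
    have hcoeff : b.coeff (2 * I) = 1 := by
      rw [hb, Polynomial.finset_sum_coeff]
      simp only [Polynomial.coeff_add, Polynomial.coeff_X_pow]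
      rw [Finset.sum_congr rfl (g := fun i => if i = I then (1:ZMod 2) else 0) (by
        intro i hi
        have hiI := hImem i hi
        by_cases h : i = I
        · rw [if_pos (by omega), if_neg (by omega)]; simp [h]
        · rw [if_neg (by omega), if_neg (by omega)]; simp [h])]
      rw [Finset.sum_ite_eq' S I (fun _ => (1:ZMod 2))]
      simp [S.max'_mem hS]
      exact S.max'_mem hS
    intro h
    rw [h] at hcoeff
    simp at hcoeff
  have haeval : (Polynomial.aeval (frobL n) b) u
      = ∑ i ∈ S, (u ^ (2 ^ (I + i)) + u ^ (2 ^ (I - i))) := by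
    rw [hb, map_sum, LinearMap.coe_sum, Finset.sum_apply]
    refine Finset.sum_congr rfl fun i _ => ?_
    rw [map_add, LinearMap.add_apply, aeval_Xpow_apply, aeval_Xpow_apply]
  have hbu : (Polynomial.aeval (frobL n) b) u = 0 := by
    rw [haeval]
    have hterm : ∀ i ∈ S, (u ^ (2 ^ i) + u ^ (2 ^ (n - i))) ^ (2 ^ I)
        = u ^ (2 ^ (I + i)) + u ^ (2 ^ (I - i)) := by
      intro i hi
      have hiI := hImem i hi
      have hin : i ≤ n := by omega
      rw [add_pow_char_pow]
      congr 1
      · rw [← pow_mul, ← pow_add, add_comm]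
      · rw [← pow_mul, ← pow_add]
        have harith : n - i + I = (I - i) + n := by omega
        rw [harith, pow_add, pow_mul, powcard n hn0]
    have h2 : ∑ i ∈ S, (u ^ (2 ^ (I + i)) + u ^ (2 ^ (I - i)))
        = (∑ i ∈ S, (u ^ (2 ^ i) + u ^ (2 ^ (n - i)))) ^ (2 ^ I) := by
      rw [sum_pow_char_pow]
      exact (Finset.sum_congr rfl hterm).symm
    rw [h2, hu]
    exact zero_pow (by positivity)
  set c : (ZMod 2)[X] := X ^ (2 * r) - 1 with hcdef
  have hcne : c ≠ 0 := by
    intro h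
    have := congrArg (Polynomial.eval 0) h
    simp [hcdef, zero_pow (by omega : 2 * r ≠ 0)] at this
  have hcpow : ∀ k : ℕ, c ^ (2 ^ k) = X ^ (2 * r * 2 ^ k) - 1 := by
    intro k
    rw [hcdef, sub_pow_char_pow, one_pow, ← pow_mul]
  set g : (ZMod 2)[X] := EuclideanDomain.gcd b (X ^ n - 1) with hgdef
  have hXnu : (Polynomial.aeval (frobL n) ((X:(ZMod 2)[X]) ^ n - 1)) u = 0 := by
    rw [map_sub, map_one, LinearMap.sub_apply, aeval_Xpow_apply, Module.End.one_apply,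
      powcard n hn0, sub_self]
  have hgu : (Polynomial.aeval (frobL n) g) u = 0 := by
    rw [hgdef, EuclideanDomain.gcd_eq_gcd_ab b (X ^ n - 1),
      mul_comm b _, mul_comm ((X:(ZMod 2)[X]) ^ n - 1) _, map_add, map_mul, map_mul,
      LinearMap.add_apply, Module.End.mul_apply, Module.End.mul_apply, hbu, hXnu,
      map_zero, map_zero, add_zero]
  have hgb : g ∣ b := EuclideanDomain.gcd_dvd_left _ _
  have hgdeg : g.natDegree ≤ 2 ^ (I + 1) := by
    have h1 : g.natDegree ≤ b.natDegree := Polynomial.natDegree_le_of_dvd hgb hb0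
    have h2 : I < 2 ^ I := Nat.lt_two_pow_self
    have h3 : (2:ℕ) ^ (I + 1) = 2 * 2 ^ I := by ring
    omega
  have hgdvd : g ∣ c ^ (2 ^ (I + 2)) := by
    have h1 : c ^ (2 ^ (I + 2)) = X ^ n - 1 := by
      rw [hcpow, hn]; ring_nf
    rw [h1]
    exact EuclideanDomain.gcd_dvd_right _ _
  have hgm : g ∣ c ^ (2 ^ (I + 1)) :=
    dvd_pow_shrink hcne (2 ^ (I + 1)) g (2 ^ (I + 2)) hgdvd hgdeg
  have hXmu : (Polynomial.aeval (frobL n) ((X:(ZMod 2)[X]) ^ (2 ^ (I + 2) * r) - 1)) u = 0 := by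
    obtain ⟨t, ht⟩ := hgm
    have h1 : (X:(ZMod 2)[X]) ^ (2 ^ (I + 2) * r) - 1 = t * g := by
      have he : 2 ^ (I + 2) * r = 2 * r * 2 ^ (I + 1) := by ring
      rw [he, ← hcpow, ht, mul_comm]
    rw [h1, map_mul, Module.End.mul_apply, hgu, map_zero]
  rw [map_sub, map_one, LinearMap.sub_apply, aeval_Xpow_apply, Module.End.one_apply,
    sub_eq_zero] at hXmu
  exact hXmu

end

end QtrAux

/-- The quadratic trace function `Q_n(x) = Tr(∑_{i∈S} x^(2^i+1))` on `GaloisField 2 n`. -/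
noncomputable def Qtr (S : Finset ℕ) (n : ℕ) (x : GaloisField 2 n) : ZMod 2 :=
  Algebra.trace (ZMod 2) (GaloisField 2 n) (∑ i ∈ S, x ^ (2 ^ i + 1))

/-- `g` is balanced if it takes the value `1` exactly `2^(n-1)` times. -/
noncomputable def BalancedG (n : ℕ) (g : GaloisField 2 n → ZMod 2) : Prop :=
  Nat.card {x : GaloisField 2 n // g x = 1} = 2 ^ (n - 1)

noncomputable section

namespace QtrAux
open Polynomial Finset

/-- The quadratic character `ZMod 2 → ℤ`. -/
def chi : ZMod 2 → ℤ := fun v => if v = 1 then -1 else 1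

lemma chi_add : ∀ a b : ZMod 2, chi (a + b) = chi a * chi b := by decide
lemma chi_zero : chi 0 = 1 := by decide
lemma chi_one : chi 1 = -1 := by decide

/-- The "radical" linear form. -/
def Lrad (S : Finset ℕ) (n : ℕ) (u : GaloisField 2 n) : GaloisField 2 n :=
  ∑ i ∈ S, (u ^ (2 ^ i) + u ^ (2 ^ (n - i)))

section
variable (n : ℕ)
local notation "F" => GaloisField 2 n
local notation "Tr" => Algebra.trace (ZMod 2) (GaloisField 2 n)

lemma Qtr_radical_zero (S : Finset ℕ) (hS : S.Nonempty) (hpos : ∀ i ∈ S, 1 ≤ i)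
    (r : ℕ) (hr : r ≠ 0) (hn : n = 2 ^ (S.max' hS + 3) * r)
    (u : F) (hu : Lrad S n u = 0) : Qtr S n u = 0 := by
  have hm0 : 2 ^ (S.max' hS + 2) * r ≠ 0 := by positivity
  have hnm : n = 2 ^ (S.max' hS + 2) * r + 2 ^ (S.max' hS + 2) * r := by rw [hn]; ring
  have hufix : u ^ (2 ^ (2 ^ (S.max' hS + 2) * r)) = u :=
    radical_in_subfield n S hS hpos r hr hn u hu
  unfold Qtr
  apply trace_zero_of_half_fixed n hm0 hnm
  rw [sum_pow_char_pow]
  refine Finset.sum_congr rfl fun i _ => ?_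
  rw [pow_right_comm, hufix]

lemma Qtr_shift (S : Finset ℕ) (hn0 : n ≠ 0) (hSn : ∀ i ∈ S, i ≤ n) (x u : F) :
    Qtr S n x + Qtr S n (x + u) = Qtr S n u + Tr (x * Lrad S n u) := by
  unfold Qtr
  have expand : ∀ i ∈ S, (x + u) ^ (2 ^ i + 1)
      = x ^ (2 ^ i + 1) + u ^ (2 ^ i + 1) + (x ^ (2 ^ i) * u + x * u ^ (2 ^ i)) := by
    intro i hi
    rw [pow_succ, pow_succ, pow_succ, add_pow_char_pow]
    ring
  rw [Finset.sum_congr rfl expand]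
  rw [Finset.sum_add_distrib, Finset.sum_add_distrib, map_add, map_add]
  have hC : Tr (∑ i ∈ S, (x ^ (2 ^ i) * u + x * u ^ (2 ^ i)))
      = Tr (x * Lrad S n u) := by
    rw [map_sum]
    have per : ∀ i ∈ S, Tr (x ^ (2 ^ i) * u + x * u ^ (2 ^ i))
        = Tr (x * (u ^ (2 ^ i) + u ^ (2 ^ (n - i)))) := by
      intro i hi
      rw [map_add, trace_shift n hn0 (hSn i hi), mul_add, map_add, add_comm]
    rw [Finset.sum_congr rfl per, ← map_sum, Lrad, Finset.mul_sum]
  rw [hC]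
  generalize Tr (∑ i ∈ S, x ^ (2 ^ i + 1)) = A
  generalize Tr (∑ i ∈ S, u ^ (2 ^ i + 1)) = B
  generalize Tr (x * Lrad S n u) = C
  revert A B C
  decide

lemma inner_sum_zero (a : F) (ha : a ≠ 0) :
    ∑ x : F, chi (Tr (x * a)) = 0 := by
  have hnd := traceForm_nondegenerate (ZMod 2) (GaloisField 2 n)
  have hex : ∃ y : F, Tr (y * a) ≠ 0 := by
    by_contra hall
    push_neg at hall
    exact ha (hnd.1 a (fun y => by rw [Algebra.traceForm_apply, mul_comm]; exact hall y))
  obtain ⟨x₁, hx₁⟩ := hex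
  have hx1 : Tr (x₁ * a) = 1 := by
    have : ∀ v : ZMod 2, v ≠ 0 → v = 1 := by decide
    exact this _ hx₁
  have hT : ∑ x : F, chi (Tr (x * a)) = - ∑ x : F, chi (Tr (x * a)) := by
    conv_lhs => rw [← Equiv.sum_comp (Equiv.addLeft x₁) (fun y => chi (Tr (y * a)))]
    have per : ∀ x : F, chi (Tr ((Equiv.addLeft x₁) x * a))
        = - chi (Tr (x * a)) := by
      intro x
      have : (Equiv.addLeft x₁) x * a = x₁ * a + x * a := by
        simp [Equiv.addLeft]; ring
      rw [this, map_add, hx1, chi_add, chi_one]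
      ring
    rw [Finset.sum_congr rfl (fun x _ => per x), Finset.sum_neg_distrib]
  omega

end
end QtrAux
end

/-- `Q_n` is unbalanced as soon as the 2-adic valuation of `n` is large enough. -/
theorem unbalanced_for_large_valuation (S : Finset ℕ) (hS : S.Nonempty)
    (hpos : ∀ i ∈ S, 1 ≤ i) :
    ∃ ν₀ : ℕ, ∀ n, 1 ≤ n → ν₀ ≤ padicValNat 2 n → ¬ BalancedG n (Qtr S n) := by
  classical
  refine ⟨S.max' hS + 3, fun n hn1 hval hbal => ?_⟩
  set I := S.max' hS with hI
  have hn0 : n ≠ 0 := by omega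
  have hdvd : 2 ^ (I + 3) ∣ n :=
    dvd_trans (pow_dvd_pow 2 hval) pow_padicValNat_dvd
  obtain ⟨r, hr⟩ := hdvd
  have hr0 : r ≠ 0 := by rintro rfl; simp at hr; exact hn0 hr
  have hSn : ∀ i ∈ S, i ≤ n := by
    intro i hi
    have h1 : i ≤ I := S.le_max' i hi
    have h2 : I < 2 ^ (I + 3) :=
      lt_of_lt_of_le (Nat.lt_two_pow_self) (Nat.pow_le_pow_right (by norm_num) (by omega))
    have h3 : 2 ^ (I + 3) ≤ n := by
      rw [hr]; exact Nat.le_mul_of_pos_right _ (by omega)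
    omega
  set s : ℤ := ∑ x : GaloisField 2 n, QtrAux.chi (Qtr S n x) with hs
  -- balancedness gives s = 0
  have hs0 : s = 0 := by
    have hN : (Finset.univ.filter (fun x : GaloisField 2 n => Qtr S n x = 1)).card
        = 2 ^ (n-1) := by
      have hb := hbal
      unfold BalancedG at hb
      rw [Nat.card_eq_fintype_card, Fintype.card_subtype] at hb
      exact hb
    have hcard : Fintype.card (GaloisField 2 n) = 2 ^ n := QtrAux.cardF n hn0
    have hsplit := Finset.card_filter_add_card_filter_not
      (s := (Finset.univ : Finset (GaloisField 2 n)))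
      (p := fun x => Qtr S n x = 1)
    rw [Finset.card_univ, hcard] at hsplit
    have h2 : (Finset.univ.filter (fun x : GaloisField 2 n => ¬ Qtr S n x = 1)).card
        = 2 ^ (n-1) := by
      have hpow : 2 ^ n = 2 ^ (n-1) + 2 ^ (n-1) := by
        have hstep : (2:ℕ) ^ (n-1) * 2 = 2 ^ (n-1+1) := (pow_succ 2 (n-1)).symm
        have hh : n - 1 + 1 = n := by omega
        rw [hh] at hstep
        omega
      omega
    have hpt : ∀ x : GaloisField 2 n,
        QtrAux.chi (Qtr S n x) = if Qtr S n x = 1 then (-1:ℤ) else 1 := fun _ => rfl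
    rw [hs, Finset.sum_congr rfl (fun x _ => hpt x), Finset.sum_ite,
      Finset.sum_const, Finset.sum_const, hN, h2]
    simp
  -- square of s
  have hsq : s * s = ∑ u : GaloisField 2 n, (QtrAux.chi (Qtr S n u)
      * ∑ x : GaloisField 2 n, QtrAux.chi
          (Algebra.trace (ZMod 2) (GaloisField 2 n) (x * QtrAux.Lrad S n u))) := by
    rw [hs, Finset.sum_mul_sum]
    have hx : ∀ x : GaloisField 2 n,
        ∑ y : GaloisField 2 n, QtrAux.chi (Qtr S n x) * QtrAux.chi (Qtr S n y)
        = ∑ u : GaloisField 2 n, QtrAux.chi (Qtr S n u) * QtrAux.chi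
            (Algebra.trace (ZMod 2) (GaloisField 2 n) (x * QtrAux.Lrad S n u)) := by
      intro x
      rw [← Equiv.sum_comp (Equiv.addLeft x)
        (fun y => QtrAux.chi (Qtr S n x) * QtrAux.chi (Qtr S n y))]
      refine Finset.sum_congr rfl fun u _ => ?_
      have h1 : QtrAux.chi (Qtr S n x) * QtrAux.chi (Qtr S n ((Equiv.addLeft x) u))
          = QtrAux.chi (Qtr S n x + Qtr S n (x + u)) := by
        rw [QtrAux.chi_add]; rfl
      rw [h1, QtrAux.Qtr_shift n S hn0 hSn x u, QtrAux.chi_add]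
    rw [Finset.sum_congr rfl (fun x _ => hx x), Finset.sum_comm]
    refine Finset.sum_congr rfl fun u _ => ?_
    rw [Finset.mul_sum]
  have hper : ∀ u : GaloisField 2 n, QtrAux.chi (Qtr S n u)
      * ∑ x : GaloisField 2 n, QtrAux.chi
          (Algebra.trace (ZMod 2) (GaloisField 2 n) (x * QtrAux.Lrad S n u))
      = if QtrAux.Lrad S n u = 0 then ((2:ℤ)^n) else 0 := by
    intro u
    by_cases h : QtrAux.Lrad S n u = 0
    · rw [if_pos h, QtrAux.Qtr_radical_zero n S hS hpos r hr0 hr u h,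
        QtrAux.chi_zero, one_mul, h]
      have : ∀ x : GaloisField 2 n, QtrAux.chi
          (Algebra.trace (ZMod 2) (GaloisField 2 n) (x * 0)) = 1 := by
        intro x; rw [mul_zero, map_zero, QtrAux.chi_zero]
      rw [Finset.sum_congr rfl (fun x _ => this x), Finset.sum_const,
        Finset.card_univ, QtrAux.cardF n hn0]
      simp
    · rw [if_neg h, QtrAux.inner_sum_zero n _ h, mul_zero]
  rw [Finset.sum_congr rfl (fun u _ => hper u)] at hsq
  have h0 : QtrAux.Lrad S n 0 = 0 := by
    unfold QtrAux.Lrad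
    refine Finset.sum_eq_zero fun i _ => ?_
    rw [zero_pow (by positivity), zero_pow (by positivity), add_zero]
  have hle : ((2:ℤ)^n) ≤ s * s := by
    rw [hsq]
    have hss := Finset.single_le_sum
      (f := fun u : GaloisField 2 n => if QtrAux.Lrad S n u = 0 then ((2:ℤ)^n) else 0)
      (fun u _ => by split <;> positivity)
      (Finset.mem_univ (0 : GaloisField 2 n))
    simpa [h0] using hss
  rw [hs0] at hle
  have hpos2 : (0:ℤ) < 2^n := by positivity
  linarith
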